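/- arXiv:2506.17649 — 2 statements merged into one kernel-verified Lean document; each statement's English description precedes it below -/
import Mathlib

section
/- A line L ⊂ ℙ³(ℂ) satisfies τ₁(L) = L and τ₂(L) = L if and only if there exists [λ:μ] ∈ ℙ¹(ℂ) such that L = L_{[λ:μ]} = {[x₀:x₁:x₂:x₃] ∈ ℙ³(ℂ) : λx₀ + μx₂ = 0 and λx₃ + μx₁ = 0}. -/
noncomputable section

/-- Projective 3-space over ℂ. -/
abbrev P3 := Projectivization ℂ (Fin 4 → ℂ)

/-- A line in ℙ³(ℂ): the image in ℙ³ of a 2-dimensional linear subspace of ℂ⁴. -/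
def IsLine (L : Set P3) : Prop :=
  ∃ W : Submodule ℂ (Fin 4 → ℂ), Module.finrank ℂ W = 2 ∧ L = {p : P3 | p.submodule ≤ W}

/-- A diagonal linear automorphism of ℂⁿ. -/
def diagEquiv {n : ℕ} (d : Fin n → ℂ) (hd : ∀ i, d i ≠ 0) : (Fin n → ℂ) ≃ₗ[ℂ] (Fin n → ℂ) :=
  LinearEquiv.piCongrRight fun i => LinearEquiv.smulOfNeZero ℂ ℂ (d i) (hd i)

/-- The linear automorphism of ℂ⁴ inducing τ₁ : [x₀:x₁:x₂:x₃] ↦ [x₃:x₂:x₁:x₀]. -/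
def tau1Equiv : (Fin 4 → ℂ) ≃ₗ[ℂ] (Fin 4 → ℂ) :=
  LinearEquiv.funCongrLeft ℂ ℂ (Equiv.subLeft (3 : Fin 4))

/-- The projective involution τ₁ of ℙ³. -/
def tau1P : P3 → P3 := Projectivization.map tau1Equiv.toLinearMap tau1Equiv.injective

/-- The linear automorphism of ℂ⁴ inducing τ₂ : [x₀:x₁:x₂:x₃] ↦ [x₀:−x₁:x₂:−x₃]. -/
def tau2Equiv : (Fin 4 → ℂ) ≃ₗ[ℂ] (Fin 4 → ℂ) :=
  diagEquiv ![1, -1, 1, -1] (by intro i; fin_cases i <;> norm_num)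

/-- The projective involution τ₂ of ℙ³. -/
def tau2P : P3 → P3 := Projectivization.map tau2Equiv.toLinearMap tau2Equiv.injective

/-- The line L_{[λ:μ]} = {λx₀ + μx₂ = 0, λx₃ + μx₁ = 0} ⊂ ℙ³.  (The defining conditions are
invariant under scaling of homogeneous coordinates, so testing them on the chosen
representative `p.rep` is well defined.) -/
def lineLM (l m : ℂ) : Set P3 :=
  {p : P3 | l * p.rep 0 + m * p.rep 2 = 0 ∧ l * p.rep 3 + m * p.rep 1 = 0}

/- ### Auxiliary material -/

lemma mem_line_iff (W : Submodule ℂ (Fin 4 → ℂ)) (p : P3) :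
    p ∈ {q : P3 | q.submodule ≤ W} ↔ p.rep ∈ W := by
  simp [Set.mem_setOf_eq, Projectivization.submodule_eq,
    Submodule.span_singleton_le_iff_mem]

lemma submodule_map_equiv (σ : (Fin 4 → ℂ) ≃ₗ[ℂ] (Fin 4 → ℂ)) (p : P3) :
    (Projectivization.map σ.toLinearMap σ.injective p).submodule
      = p.submodule.map σ.toLinearMap := by
  conv_lhs => rw [← p.mk_rep, Projectivization.map_mk]
  rw [Projectivization.submodule_mk, Projectivization.submodule_eq,
    Submodule.map_span, Set.image_singleton]

lemma image_line (σ : (Fin 4 → ℂ) ≃ₗ[ℂ] (Fin 4 → ℂ)) (W : Submodule ℂ (Fin 4 → ℂ)) :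
    Projectivization.map σ.toLinearMap σ.injective '' {p : P3 | p.submodule ≤ W}
      = {p : P3 | p.submodule ≤ W.map σ.toLinearMap} := by
  ext q
  constructor
  · rintro ⟨p, hp, rfl⟩
    rw [Set.mem_setOf_eq, submodule_map_equiv]
    exact Submodule.map_mono hp
  · intro hq
    rw [mem_line_iff] at hq
    obtain ⟨w, hw, hwq⟩ := hq
    have hw0 : w ≠ 0 := by
      intro h; apply q.rep_nonzero; rw [← hwq, h, map_zero]
    refine ⟨Projectivization.mk ℂ w hw0, ?_, ?_⟩
    · rw [mem_line_iff]
      have := Projectivization.exists_smul_eq_mk_rep ℂ w hw0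
      obtain ⟨a, ha⟩ := this
      rw [← ha]; exact Submodule.smul_mem _ _ hw
    · rw [Projectivization.map_mk]
      have : σ w = q.rep := hwq
      conv_rhs => rw [← q.mk_rep]
      congr 1 <;> rw [this]
  
lemma line_eq_line {W₁ W₂ : Submodule ℂ (Fin 4 → ℂ)}
    (h : {p : P3 | p.submodule ≤ W₁} = {p : P3 | p.submodule ≤ W₂}) : W₁ = W₂ := by
  apply le_antisymm <;> intro v hv
  · by_cases hv0 : v = 0
    · simp [hv0]
    · have : Projectivization.mk ℂ v hv0 ∈ {p : P3 | p.submodule ≤ W₁} := by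
        rw [Set.mem_setOf_eq, Projectivization.submodule_mk,
          Submodule.span_singleton_le_iff_mem]; exact hv
      rw [h, Set.mem_setOf_eq, Projectivization.submodule_mk,
        Submodule.span_singleton_le_iff_mem] at this
      exact this
  · by_cases hv0 : v = 0
    · simp [hv0]
    · have : Projectivization.mk ℂ v hv0 ∈ {p : P3 | p.submodule ≤ W₂} := by
        rw [Set.mem_setOf_eq, Projectivization.submodule_mk,
          Submodule.span_singleton_le_iff_mem]; exact hv
      rw [← h, Set.mem_setOf_eq, Projectivization.submodule_mk,
        Submodule.span_singleton_le_iff_mem] at this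
      exact this

/-- The linear map whose kernel is the line `L_{[l:m]}`. -/
def flm (l m : ℂ) : (Fin 4 → ℂ) →ₗ[ℂ] (Fin 2 → ℂ) where
  toFun x := ![l * x 0 + m * x 2, l * x 3 + m * x 1]
  map_add' x y := by funext i; fin_cases i <;> simp <;> ring
  map_smul' c x := by funext i; fin_cases i <;> simp <;> ring

lemma flm_apply (l m : ℂ) (x : Fin 4 → ℂ) :
    flm l m x = ![l * x 0 + m * x 2, l * x 3 + m * x 1] := rfl

lemma mem_ker_flm (l m : ℂ) (x : Fin 4 → ℂ) :
    x ∈ LinearMap.ker (flm l m) ↔ (l * x 0 + m * x 2 = 0 ∧ l * x 3 + m * x 1 = 0) := by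
  rw [LinearMap.mem_ker, flm_apply, funext_iff, Fin.forall_fin_two]
  simp

lemma ne_or_ne_of_pair_ne_zero {l m : ℂ} (h : (![l, m] : Fin 2 → ℂ) ≠ 0) :
    l ≠ 0 ∨ m ≠ 0 := by
  by_contra hc
  push_neg at hc
  apply h
  funext i; fin_cases i <;> simp [hc.1, hc.2]

lemma flm_surjective {l m : ℂ} (h : (![l, m] : Fin 2 → ℂ) ≠ 0) :
    Function.Surjective (flm l m) := by
  intro y
  rcases ne_or_ne_of_pair_ne_zero h with hl | hm
  · refine ⟨![y 0 / l, 0, 0, y 1 / l], ?_⟩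
    funext i; fin_cases i <;> simp [flm_apply] <;> field_simp
  · refine ⟨![0, y 1 / m, y 0 / m, 0], ?_⟩
    funext i; fin_cases i <;> simp [flm_apply] <;> field_simp

lemma finrank_ker_flm {l m : ℂ} (h : (![l, m] : Fin 2 → ℂ) ≠ 0) :
    Module.finrank ℂ (LinearMap.ker (flm l m)) = 2 := by
  have h1 := LinearMap.finrank_range_add_finrank_ker (flm l m)
  have h2 : LinearMap.range (flm l m) = ⊤ := LinearMap.range_eq_top.mpr (flm_surjective h)
  rw [h2] at h1
  have h3 : Module.finrank ℂ (⊤ : Submodule ℂ (Fin 2 → ℂ)) = 2 := by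
    simp [Module.finrank_fin_fun]
  have h4 : Module.finrank ℂ (Fin 4 → ℂ) = 4 := by
    simp [Module.finrank_fin_fun]
  rw [h3, h4] at h1
  omega

lemma lineLM_eq (l m : ℂ) :
    lineLM l m = {p : P3 | p.submodule ≤ LinearMap.ker (flm l m)} := by
  ext p
  rw [mem_line_iff, mem_ker_flm]
  rfl

lemma tau1_apply (x : Fin 4 → ℂ) (i : Fin 4) : tau1Equiv x i = x (3 - i) := rfl

lemma tau2_apply (x : Fin 4 → ℂ) (i : Fin 4) :
    tau2Equiv x i = ![1, -1, 1, -1] i * x i := rfl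

lemma tau1_invol (x : Fin 4 → ℂ) : tau1Equiv (tau1Equiv x) = x := by
  funext i
  rw [tau1_apply, tau1_apply, sub_sub_cancel]

lemma tau2_invol (x : Fin 4 → ℂ) : tau2Equiv (tau2Equiv x) = x := by
  funext i
  rw [tau2_apply, tau2_apply]
  fin_cases i <;> simp

lemma map_eq_of_invol (σ : (Fin 4 → ℂ) ≃ₗ[ℂ] (Fin 4 → ℂ)) (K : Submodule ℂ (Fin 4 → ℂ))
    (hinv : ∀ x, σ (σ x) = x) (h : ∀ x ∈ K, σ x ∈ K) :
    K.map σ.toLinearMap = K := by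
  apply le_antisymm
  · rintro x ⟨y, hy, rfl⟩; exact h y hy
  · intro x hx; exact ⟨σ x, h x hx, hinv x⟩

/-- a line L ⊂ ℙ³(ℂ) satisfies τ₁(L) = L and τ₂(L) = L if and only if
L = L_{[λ:μ]} for some [λ:μ] ∈ ℙ¹(ℂ). -/
theorem stmt4 (L : Set P3) (hL : IsLine L) :
    (tau1P '' L = L ∧ tau2P '' L = L) ↔
      ∃ l m : ℂ, (![l, m] : Fin 2 → ℂ) ≠ 0 ∧ L = lineLM l m := by
  constructor
  · rintro ⟨h1, h2⟩
    obtain ⟨W, hWr, rfl⟩ := hL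
    rw [show tau1P = Projectivization.map tau1Equiv.toLinearMap tau1Equiv.injective from rfl,
      image_line] at h1
    rw [show tau2P = Projectivization.map tau2Equiv.toLinearMap tau2Equiv.injective from rfl,
      image_line] at h2
    have hW1 : W.map tau1Equiv.toLinearMap = W := line_eq_line h1
    have hW2 : W.map tau2Equiv.toLinearMap = W := line_eq_line h2
    have hT1 : ∀ x ∈ W, tau1Equiv x ∈ W := fun x hx =>
      hW1 ▸ Submodule.mem_map_of_mem hx
    have hT2 : ∀ x ∈ W, tau2Equiv x ∈ W := fun x hx =>
      hW2 ▸ Submodule.mem_map_of_mem hx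
    -- find a nonzero vector of shape (a, 0, b, 0) in W
    have hWbot : W ≠ ⊥ := by
      intro h; rw [h] at hWr; simp at hWr
    obtain ⟨w, hw, hw0⟩ := Submodule.exists_mem_ne_zero_of_ne_bot hWbot
    obtain ⟨v, hvW, hvne, hv1, hv3⟩ :
        ∃ v, v ∈ W ∧ v ≠ 0 ∧ v 1 = 0 ∧ v 3 = 0 := by
      set u := w + tau2Equiv w with hu_def
      have hu_mem : u ∈ W := W.add_mem hw (hT2 w hw)
      have hu0 : u 0 = 2 * w 0 := by
        simp [hu_def, tau2_apply]; ring
      have hu1 : u 1 = 0 := by simp [hu_def, tau2_apply]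
      have hu2 : u 2 = 2 * w 2 := by
        simp [hu_def, tau2_apply]; ring
      have hu3 : u 3 = 0 := by simp [hu_def, tau2_apply]
      by_cases hu : u = 0
      · have hw02 : w 0 = 0 ∧ w 2 = 0 := by
          rw [hu] at hu0 hu2
          constructor
          · have := hu0.symm; simpa using this
          · have := hu2.symm; simpa using this
        refine ⟨tau1Equiv w, hT1 w hw, ?_, ?_, ?_⟩
        · simp [hw0]
        · rw [tau1_apply]; exact hw02.2
        · rw [tau1_apply]; exact hw02.1
      · exact ⟨u, hu_mem, hu, hu1, hu3⟩
    set a := v 0 with ha_def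
    set b := v 2 with hb_def
    have hab : a ≠ 0 ∨ b ≠ 0 := by
      by_contra hc
      push_neg at hc
      apply hvne
      funext i; fin_cases i
      · exact hc.1
      · exact hv1
      · exact hc.2
      · exact hv3
    set u2 := tau1Equiv v with hu2_def
    have hu2W : u2 ∈ W := hT1 v hvW
    have hu20 : u2 0 = 0 := by rw [hu2_def, tau1_apply]; exact hv3
    have e21 : (3 - 1 : Fin 4) = 2 := by decide
    have e23 : (3 - 3 : Fin 4) = 0 := by decide
    have hu21 : u2 1 = b := by rw [hu2_def, tau1_apply, e21]
    have hu22 : u2 2 = 0 := by rw [hu2_def, tau1_apply]; exact hv1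
    have hu23 : u2 3 = a := by rw [hu2_def, tau1_apply, e23]
    have hli : LinearIndependent ℂ ![v, u2] := by
      rw [LinearIndependent.pair_iff]
      intro s t hst
      have c0 := congrFun hst 0
      have c1 := congrFun hst 1
      have c2 := congrFun hst 2
      have c3 := congrFun hst 3
      simp [hu20, hu21, hu22, hu23, hv1, hv3, ← ha_def, ← hb_def] at c0 c1 c2 c3
      rcases hab with h | h
      · exact ⟨by simpa [h] using c0, by simpa [h] using c3⟩
      · exact ⟨by simpa [h] using c2, by simpa [h] using c1⟩
    have hspan_rank : Module.finrank ℂ (Submodule.span ℂ (Set.range ![v, u2])) = 2 := by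
      rw [finrank_span_eq_card hli]
      simp
    have hspanle : Submodule.span ℂ (Set.range ![v, u2]) ≤ W := by
      rw [Submodule.span_le, Set.range_subset_iff]
      intro i; fin_cases i <;> simpa
    have hspanW : Submodule.span ℂ (Set.range ![v, u2]) = W :=
      Submodule.eq_of_le_of_finrank_le hspanle (by rw [hWr, hspan_rank])
    have hlm : (![-b, a] : Fin 2 → ℂ) ≠ 0 := by
      intro h
      rcases hab with h' | h'
      · apply h'; have := congrFun h 1; simpa using this
      · apply h'; have := congrFun h 0; simpa using this
    have hWker : W = LinearMap.ker (flm (-b) a) := by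
      have hle : W ≤ LinearMap.ker (flm (-b) a) := by
        rw [← hspanW, Submodule.span_le, Set.range_subset_iff]
        intro i
        fin_cases i
        · show v ∈ (LinearMap.ker (flm (-b) a) : Set (Fin 4 → ℂ))
          rw [SetLike.mem_coe, mem_ker_flm]
          exact ⟨by rw [ha_def, hb_def]; ring, by rw [hv1, hv3]; ring⟩
        · show u2 ∈ (LinearMap.ker (flm (-b) a) : Set (Fin 4 → ℂ))
          rw [SetLike.mem_coe, mem_ker_flm]
          exact ⟨by rw [hu20, hu22]; ring, by rw [hu21, hu23]; ring⟩
      exact Submodule.eq_of_le_of_finrank_le hle (by rw [hWr, finrank_ker_flm hlm])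
    refine ⟨-b, a, hlm, ?_⟩
    rw [lineLM_eq, hWker]
  · rintro ⟨l, m, hlm, rfl⟩
    rw [lineLM_eq]
    have h1 : ∀ x ∈ LinearMap.ker (flm l m), tau1Equiv x ∈ LinearMap.ker (flm l m) := by
      intro x hx
      rw [mem_ker_flm] at hx ⊢
      have e0 : tau1Equiv x 0 = x 3 := rfl
      have e1 : tau1Equiv x 1 = x 2 := rfl
      have e2 : tau1Equiv x 2 = x 1 := rfl
      have e3 : tau1Equiv x 3 = x 0 := rfl
      rw [e0, e1, e2, e3]
      exact ⟨hx.2, hx.1⟩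
    have h2 : ∀ x ∈ LinearMap.ker (flm l m), tau2Equiv x ∈ LinearMap.ker (flm l m) := by
      intro x hx
      rw [mem_ker_flm] at hx ⊢
      have e0 : tau2Equiv x 0 = x 0 := by rw [tau2_apply]; simp
      have e1 : tau2Equiv x 1 = -x 1 := by rw [tau2_apply]; simp
      have e2 : tau2Equiv x 2 = x 2 := by rw [tau2_apply]; simp
      have e3 : tau2Equiv x 3 = -x 3 := by rw [tau2_apply]; simp
      rw [e0, e1, e2, e3]
      exact ⟨hx.1, by linear_combination -hx.2⟩
    constructor
    · rw [show tau1P = Projectivization.map tau1Equiv.toLinearMap tau1Equiv.injective from rfl,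
        image_line, map_eq_of_invol _ _ tau1_invol h1]
    · rw [show tau2P = Projectivization.map tau2Equiv.toLinearMap tau2Equiv.injective from rfl,
        image_line, map_eq_of_invol _ _ tau2_invol h2]
end
end

section
/- Let ω ∈ ℂ be a primitive cube root of unity. For all [x:y] ∈ ℙ¹(ℂ) one has τ(ψ([x:y])) = ψ([y:x]) and σ(ψ([x:y])) = ψ([x:ωy]); consequently the curve Γ₁ = ψ(ℙ¹) is invariant under the group G = ⟨τ, σ⟩ ≅ ℤ/2 ⋊ ℤ/3 acting on ℙ⁴(ℂ). -/
noncomputable section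

/-- Projective 4-space over ℂ. -/
abbrev P4 := Projectivization ℂ (Fin 5 → ℂ)

/-- Homogeneous coordinates of ψ([x:y]) = [x⁵ : 2x³y² + y⁵ : x⁴y + xy⁴ : 2x²y³ + x⁵ : y⁵]. -/
def psiVec (x y : ℂ) : Fin 5 → ℂ :=
  ![x ^ 5, 2 * x ^ 3 * y ^ 2 + y ^ 5, x ^ 4 * y + x * y ^ 4, 2 * x ^ 2 * y ^ 3 + x ^ 5, y ^ 5]

/-- The linear automorphism of ℂ⁵ inducing τ : [x₀:x₁:x₂:x₃:x₄] ↦ [x₄:x₃:x₂:x₁:x₀]. -/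
def tauEquiv4 : (Fin 5 → ℂ) ≃ₗ[ℂ] (Fin 5 → ℂ) :=
  LinearEquiv.funCongrLeft ℂ ℂ (Equiv.subLeft (4 : Fin 5))

/-- The projective involution τ of ℙ⁴. -/
def tauP4 : P4 → P4 := Projectivization.map tauEquiv4.toLinearMap tauEquiv4.injective

/-- The linear automorphism of ℂ⁵ inducing
σ : [x₀:x₁:x₂:x₃:x₄] ↦ [x₀:ω²x₁:ωx₂:x₃:ω²x₄], for ω ≠ 0. -/
def sigmaEquiv4 (ω : ℂ) (hω : ω ≠ 0) : (Fin 5 → ℂ) ≃ₗ[ℂ] (Fin 5 → ℂ) :=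
  diagEquiv ![1, ω ^ 2, ω, 1, ω ^ 2]
    (by intro i; fin_cases i <;> simp [hω])

/-- The projective automorphism σ of ℙ⁴. -/
def sigmaP4 (ω : ℂ) (hω : ω ≠ 0) : P4 → P4 :=
  Projectivization.map (sigmaEquiv4 ω hω).toLinearMap (sigmaEquiv4 ω hω).injective

/-- for ω a primitive cube root of unity, τ(ψ([x:y])) = ψ([y:x]) and
σ(ψ([x:y])) = ψ([x:ωy]) for all [x:y] ∈ ℙ¹; hence Γ₁ = ψ(ℙ¹) is invariant under
G = ⟨τ, σ⟩ ≅ ℤ/2 ⋊ ℤ/3. -/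
theorem stmt10 (ω : ℂ) (hω : IsPrimitiveRoot ω 3) (x y : ℂ) (hxy : ¬(x = 0 ∧ y = 0))
    (h1 : psiVec x y ≠ 0) (h2 : psiVec y x ≠ 0) (h3 : psiVec x (ω * y) ≠ 0) :
    tauP4 (Projectivization.mk ℂ (psiVec x y) h1) = Projectivization.mk ℂ (psiVec y x) h2 ∧
      sigmaP4 ω (hω.ne_zero (by norm_num)) (Projectivization.mk ℂ (psiVec x y) h1) =
        Projectivization.mk ℂ (psiVec x (ω * y)) h3 := by
  have hw3 : ω ^ 3 = 1 := hω.pow_eq_one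
  have ht : tauEquiv4.toLinearMap (psiVec x y) = psiVec y x := by
    funext i
    fin_cases i <;>
      simp [tauEquiv4, psiVec, LinearEquiv.funCongrLeft, Equiv.subLeft] <;> ring
  have e3 : (ω * y) ^ 3 = y ^ 3 := by rw [mul_pow, hw3, one_mul]
  have e4 : (ω * y) ^ 4 = ω * y ^ 4 := by
    rw [mul_pow]; linear_combination y ^ 4 * ω * hw3
  have e5 : (ω * y) ^ 5 = ω ^ 2 * y ^ 5 := by
    rw [mul_pow]; linear_combination y ^ 5 * ω ^ 2 * hw3
  have hs : (sigmaEquiv4 ω (hω.ne_zero (by norm_num))).toLinearMap (psiVec x y) =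
      psiVec x (ω * y) := by
    funext i
    fin_cases i <;>
      simp [sigmaEquiv4, diagEquiv, psiVec, LinearEquiv.piCongrRight,
        LinearEquiv.smulOfNeZero, LinearEquiv.smulOfUnit, e3, e4, e5] <;> ring
  constructor
  · rw [tauP4, Projectivization.map_mk, Projectivization.mk_eq_mk_iff']
    exact ⟨1, by simpa using ht.symm⟩
  · rw [sigmaP4, Projectivization.map_mk, Projectivization.mk_eq_mk_iff']
    exact ⟨1, by simpa using hs.symm⟩
end
end
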